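/- Let n ≥ 1 and let φ : ℝⁿ → ℝ be a continuous function with φ(x)/‖x‖ → +∞ as ‖x‖ → ∞. Then for every constant C > 0, lim_{N → ∞} (C^N / (N+1)!) · sup_{x ∈ ℝⁿ} (1 + ‖x‖)^{N+1} e^{−φ(x)} = 0. -/

import Mathlib

open Real Set Filter

/-- If `φ : ℝⁿ → ℝ` is continuous with `φ(x)/‖x‖ → ∞` as `‖x‖ → ∞`, then for every
constant `C > 0`, `(C^N / (N+1)!) · sup_{x} (1 + ‖x‖)^{N+1} e^{-φ(x)} → 0` as `N → ∞`. -/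
theorem factorial_beats_weighted_polynomial_sup (n : ℕ) (hn : 1 ≤ n)
    (φ : EuclideanSpace ℝ (Fin n) → ℝ) (hφ : Continuous φ)
    (hgrow : Tendsto (fun x => φ x / ‖x‖) (cocompact (EuclideanSpace ℝ (Fin n))) atTop) :
    ∀ C : ℝ, 0 < C →
      Tendsto (fun N : ℕ =>
          C ^ N / ((N + 1).factorial : ℝ) *
            sSup {r : ℝ | ∃ x : EuclideanSpace ℝ (Fin n),
              r = (1 + ‖x‖) ^ (N + 1) * Real.exp (-(φ x))})
        atTop (nhds 0) := by
  intro C hC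
  set M : ℝ := 2 * C with hM
  have hM0 : 0 < M := by positivity
  -- get a compact set outside of which φ x ≥ M ‖x‖
  obtain ⟨K, hK, hKsub⟩ := mem_cocompact.mp (hgrow.eventually_ge_atTop M)
  set K' : Set (EuclideanSpace ℝ (Fin n)) := K ∪ Metric.closedBall 0 1 with hK'
  have hK'c : IsCompact K' := hK.union (isCompact_closedBall 0 1)
  have hK'ne : K'.Nonempty := ⟨0, Or.inr (by simp)⟩
  obtain ⟨x₀, hx₀K, hx₀min⟩ := hK'c.exists_isMinOn hK'ne hφ.continuousOn
  obtain ⟨R, hR⟩ := hK'c.isBounded.subset_closedBall 0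
  -- the linear lower bound
  set c : ℝ := max 0 (M * R - φ x₀) with hc
  have hc0 : 0 ≤ c := le_max_left _ _
  have hlow : ∀ x, M * ‖x‖ - c ≤ φ x := by
    intro x
    by_cases hx : x ∈ K'
    · have h1 : ‖x‖ ≤ R := by simpa using hR hx
      have h2 : φ x₀ ≤ φ x := hx₀min hx
      have : M * R - φ x₀ ≤ c := le_max_right _ _
      nlinarith [hM0.le]
    · have hxK : x ∉ K := fun h => hx (Or.inl h)
      have hx1 : 1 < ‖x‖ := by
        by_contra h
        exact hx (Or.inr (by simpa using le_of_not_gt h))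
      have h0 : (0:ℝ) < ‖x‖ := by linarith
      have := hKsub hxK
      have : M ≤ φ x / ‖x‖ := this
      have : M * ‖x‖ ≤ φ x := by
        rw [le_div_iff₀ h0] at this; linarith
      linarith
  set E : ℝ := Real.exp (c + M) with hE
  have hE0 : 0 < E := Real.exp_pos _
  -- pointwise bound on the sup elements
  have key : ∀ N : ℕ, ∀ x, (1 + ‖x‖) ^ (N + 1) * Real.exp (-(φ x))
      ≤ ((N + 1).factorial : ℝ) / M ^ (N + 1) * E := by
    intro N x
    set s : ℝ := M * (1 + ‖x‖) with hs
    have hnx : 0 ≤ ‖x‖ := norm_nonneg x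
    have hs0 : 0 ≤ s := by positivity
    have h1 : (1 + ‖x‖) ^ (N + 1) = s ^ (N + 1) / M ^ (N + 1) := by
      rw [hs, mul_pow, mul_div_cancel_left₀ _ (by positivity : (M:ℝ) ^ (N+1) ≠ 0)]
    have h2 : Real.exp (-(φ x)) ≤ Real.exp (c + M - s) := by
      apply Real.exp_le_exp.mpr
      have := hlow x
      rw [hs]; nlinarith
    have h3 : s ^ (N + 1) ≤ ((N + 1).factorial : ℝ) * Real.exp s := by
      have := Real.pow_div_factorial_le_exp s hs0 (N + 1)
      rw [div_le_iff₀ (by positivity)] at this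
      linarith [this]
    calc (1 + ‖x‖) ^ (N + 1) * Real.exp (-(φ x))
        ≤ s ^ (N + 1) / M ^ (N + 1) * Real.exp (c + M - s) := by
          rw [h1]; exact mul_le_mul_of_nonneg_left h2 (by positivity)
      _ ≤ ((N + 1).factorial : ℝ) * Real.exp s / M ^ (N + 1) * Real.exp (c + M - s) := by
          gcongr
      _ = ((N + 1).factorial : ℝ) / M ^ (N + 1) * E := by
          rw [hE, Real.exp_sub]
          have : Real.exp s ≠ 0 := (Real.exp_pos s).ne'
          field_simp
  -- bound the whole term
  have hbound : ∀ N : ℕ,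
      C ^ N / ((N + 1).factorial : ℝ) *
        sSup {r : ℝ | ∃ x : EuclideanSpace ℝ (Fin n),
          r = (1 + ‖x‖) ^ (N + 1) * Real.exp (-(φ x))}
      ≤ E / M * (1 / 2) ^ N := by
    intro N
    have hsup : sSup {r : ℝ | ∃ x : EuclideanSpace ℝ (Fin n),
        r = (1 + ‖x‖) ^ (N + 1) * Real.exp (-(φ x))}
        ≤ ((N + 1).factorial : ℝ) / M ^ (N + 1) * E := by
      apply Real.sSup_le
      · rintro r ⟨x, rfl⟩; exact key N x
      · positivity
    calc C ^ N / ((N + 1).factorial : ℝ) *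
          sSup {r : ℝ | ∃ x : EuclideanSpace ℝ (Fin n),
            r = (1 + ‖x‖) ^ (N + 1) * Real.exp (-(φ x))}
        ≤ C ^ N / ((N + 1).factorial : ℝ) *
            (((N + 1).factorial : ℝ) / M ^ (N + 1) * E) := by
          apply mul_le_mul_of_nonneg_left hsup (by positivity)
      _ = E / M * (1 / 2) ^ N := by
          have hfac : ((N + 1).factorial : ℝ) ≠ 0 := by positivity
          field_simp [hM]
          have h2 : M ^ N * (1/2:ℝ)^N = C^N := by rw [← mul_pow, hM]; congr 1; ring
          linear_combination (-M) * h2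
  have hnonneg : ∀ N : ℕ, 0 ≤
      C ^ N / ((N + 1).factorial : ℝ) *
        sSup {r : ℝ | ∃ x : EuclideanSpace ℝ (Fin n),
          r = (1 + ‖x‖) ^ (N + 1) * Real.exp (-(φ x))} := by
    intro N
    apply mul_nonneg (by positivity)
    apply Real.sSup_nonneg
    rintro r ⟨x, rfl⟩
    positivity
  have htend : Tendsto (fun N : ℕ => E / M * (1 / 2 : ℝ) ^ N) atTop (nhds 0) := by
    have := tendsto_pow_atTop_nhds_zero_of_lt_one (by norm_num : (0:ℝ) ≤ 1/2)
      (by norm_num : (1/2:ℝ) < 1)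
    simpa using this.const_mul (E / M)
  exact squeeze_zero hnonneg hbound htend
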